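/- A distance-polynomial graph with diameter D and d+1 distinct eigenvalues is distance-regular if and only if D = d. -/

import Mathlib

set_option linter.unusedSectionVars false


open scoped Classical

/-- A graph is distance-regular if the intersection numbers
`b_i = |Γ(v) ∩ Γ_{i+1}(u)|` and `c_i = |Γ(v) ∩ Γ_{i-1}(u)|` depend only on
`i = dist(u,v)`. -/
def IsDistanceRegular {V : Type*} [Fintype V] (G : SimpleGraph V) : Prop :=
  ∀ i : ℕ, ∃ b c : ℕ, ∀ u v : V, G.dist u v = i →
    (Finset.univ.filter (fun w => G.Adj v w ∧ G.dist u w = i + 1)).card = b ∧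
    (Finset.univ.filter (fun w => G.Adj v w ∧ G.dist u w = i - 1)).card = c

namespace Stmt12Aux

open Finset Polynomial SimpleGraph Module

variable {V : Type*} [Fintype V] [DecidableEq V] [Nonempty V] (G : SimpleGraph V)
  [DecidableRel G.Adj]

/-- The `i`-th distance matrix. -/
noncomputable def Ai (i : ℕ) : Matrix V V ℝ :=
  Matrix.of (fun v w => if G.dist v w = i then (1 : ℝ) else 0)

lemma Ai_apply (i : ℕ) (u v : V) :
    Ai G i u v = if G.dist u v = i then (1 : ℝ) else 0 := rfl

lemma card_filter_ext {p q : V → Prop} {i1 : DecidablePred p}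
    {i2 : DecidablePred q} (h : ∀ w, p w ↔ q w) :
    (@Finset.filter V p i1 Finset.univ).card =
      (@Finset.filter V q i2 Finset.univ).card := by
  classical
  have e1 : @Finset.filter V p i1 Finset.univ = Finset.univ.filter p := by
    congr
  have e2 : @Finset.filter V q i2 Finset.univ = Finset.univ.filter q := by
    congr
  rw [e1, e2]
  have heq : Finset.univ.filter p = Finset.univ.filter q := by
    ext w
    simp only [Finset.mem_filter, Finset.mem_univ, true_and]
    exact h w
  exact congrArg Finset.card heq

lemma card_filter_zero {p : V → Prop} {ip : DecidablePred p}
    (hp : ∀ w, ¬ p w) : (@Finset.filter V p ip Finset.univ).card = 0 := by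
  rw [Finset.card_eq_zero, Finset.filter_eq_empty_iff]
  exact fun w _ hw => hp w hw

lemma dist_getVert_le (hconn : G.Connected) {u v : V} (p : G.Walk u v) :
    ∀ i, i ≤ p.length →
      G.dist u (p.getVert i) ≤ i ∧ G.dist (p.getVert i) v ≤ p.length - i := by
  induction p with
  | nil =>
    intro i hi
    simp only [SimpleGraph.Walk.length_nil, Nat.le_zero] at hi
    subst hi
    simp
  | @cons a b c h q ih =>
    intro i hi
    cases i with
    | zero =>
      refine ⟨by simp, ?_⟩
      simpa using SimpleGraph.dist_le (SimpleGraph.Walk.cons h q)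
    | succ i =>
      have hi' : i ≤ q.length := by
        simpa [SimpleGraph.Walk.length_cons] using hi
      obtain ⟨h1, h2⟩ := ih i hi'
      have hg : (SimpleGraph.Walk.cons h q).getVert (i + 1) = q.getVert i := rfl
      constructor
      · rw [hg]
        have htri := hconn.dist_triangle (u := a) (v := b) (w := q.getVert i)
        have hab : G.dist a b = 1 := SimpleGraph.dist_eq_one_iff_adj.mpr h
        omega
      · rw [hg]
        have : (SimpleGraph.Walk.cons h q).length = q.length + 1 := rfl
        rw [this]
        omega

lemma exists_intermediate (hconn : G.Connected) {u v : V} {i : ℕ}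
    (hi : i ≤ G.dist u v) :
    ∃ w : V, G.dist u w = i ∧ G.dist w v = G.dist u v - i := by
  obtain ⟨p, hp⟩ := (hconn u v).exists_walk_length_eq_dist
  obtain ⟨h1, h2⟩ := dist_getVert_le G hconn p i (by omega)
  have h3 := hconn.dist_triangle (u := u) (v := p.getVert i) (w := v)
  exact ⟨p.getVert i, by omega, by omega⟩

lemma attained {D : ℕ} (hconn : G.Connected)
    (hDatt : ∃ v w : V, G.dist v w = D) :
    ∀ i ≤ D, ∃ u v : V, G.dist u v = i := by
  obtain ⟨a, b, hab⟩ := hDatt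
  intro i hi
  obtain ⟨w, hw, -⟩ := exists_intermediate G hconn (u := a) (v := b) (i := i)
    (by omega)
  exact ⟨a, w, hw⟩

lemma dist_adj_bounds (hconn : G.Connected) {u v w : V} (h : G.Adj w v) :
    G.dist u v ≤ G.dist u w + 1 ∧ G.dist u w ≤ G.dist u v + 1 := by
  have h1 := hconn.dist_triangle (u := u) (v := w) (w := v)
  have h2 := hconn.dist_triangle (u := u) (v := v) (w := w)
  have hwv : G.dist w v = 1 := SimpleGraph.dist_eq_one_iff_adj.mpr h
  have hvw : G.dist v w = 1 := SimpleGraph.dist_eq_one_iff_adj.mpr h.symm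
  omega

lemma mul_adj_apply (i : ℕ) (u v : V) :
    (Ai G i * G.adjMatrix ℝ) u v =
      ((Finset.univ.filter (fun w => G.dist u w = i ∧ G.Adj w v)).card : ℝ) := by
  rw [Matrix.mul_apply, Finset.card_filter]
  push_cast
  refine Finset.sum_congr rfl fun w _ => ?_
  by_cases h1 : G.dist u w = i <;> by_cases h2 : G.Adj w v <;>
    simp [Ai_apply, h1, h2]

/-- A matrix is distance-constant if its entries depend only on the distance. -/
def DC (M : Matrix V V ℝ) : Prop :=
  ∀ u v u' v' : V, G.dist u v = G.dist u' v' → M u v = M u' v'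

/-- The span of the distance matrices `A_0, …, A_D`. -/
noncomputable def SpanAi (D : ℕ) : Submodule ℝ (Matrix V V ℝ) :=
  Submodule.span ℝ (Set.range fun i : Fin (D + 1) => Ai G (i : ℕ))

/-- The span of the powers `A^0, …, A^d`. -/
noncomputable def SpanPow (d : ℕ) : Submodule ℝ (Matrix V V ℝ) :=
  Submodule.span ℝ (Set.range fun k : Fin (d + 1) => G.adjMatrix ℝ ^ (k : ℕ))

lemma dc_of_mem {D : ℕ} {M : Matrix V V ℝ} (hM : M ∈ SpanAi G D) : DC G M := by
  induction hM using Submodule.span_induction with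
  | mem x hx =>
    obtain ⟨i, rfl⟩ := hx
    intro u v u' v' h
    simp [Ai_apply, h]
  | zero => intro u v u' v' h; simp
  | add x y _ _ hx hy =>
    intro u v u' v' h
    simp only [Matrix.add_apply, hx u v u' v' h, hy u v u' v' h]
  | smul c x _ hx =>
    intro u v u' v' h
    simp only [Matrix.smul_apply, hx u v u' v' h]

lemma mem_of_dc {D : ℕ} (hDub : ∀ v w : V, G.dist v w ≤ D)
    (hatt : ∀ i ≤ D, ∃ u v : V, G.dist u v = i)
    {M : Matrix V V ℝ} (hM : DC G M) : M ∈ SpanAi G D := by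
  choose! x y hxy using hatt
  have hrep : M = ∑ m : Fin (D + 1), M (x (m : ℕ)) (y (m : ℕ)) • Ai G (m : ℕ) := by
    ext u v
    rw [Matrix.sum_apply]
    have hle : G.dist u v ≤ D := hDub u v
    rw [Finset.sum_eq_single (⟨G.dist u v, by omega⟩ : Fin (D + 1))]
    · have hd : G.dist (x (G.dist u v)) (y (G.dist u v)) = G.dist u v :=
        hxy _ hle
      rw [Matrix.smul_apply, Ai_apply, hM _ _ u v hd]
      simp
    · intro b _ hb
      rw [Matrix.smul_apply, Ai_apply]
      have : G.dist u v ≠ (b : ℕ) := by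
        intro hcontra
        apply hb
        apply Fin.ext
        simp [← hcontra]
      simp [this]
    · intro hmem
      exact absurd (Finset.mem_univ _) hmem
  rw [hrep]
  exact Submodule.sum_mem _ fun m _ =>
    Submodule.smul_mem _ _ (Submodule.subset_span ⟨m, rfl⟩)

lemma aeval_mem {d : ℕ} (hd : (minpoly ℝ (G.adjMatrix ℝ)).natDegree = d + 1)
    (p : ℝ[X]) : Polynomial.aeval (G.adjMatrix ℝ) p ∈ SpanPow G d := by
  set A := G.adjMatrix ℝ with hA
  have hint : IsIntegral ℝ A := IsIntegral.of_finite ℝ A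
  have hmon : (minpoly ℝ A).Monic := minpoly.monic hint
  have hne1 : minpoly ℝ A ≠ 1 := by
    intro h
    rw [h] at hd
    simp at hd
  have hdeg : (p %ₘ minpoly ℝ A).natDegree < d + 1 :=
    hd ▸ Polynomial.natDegree_modByMonic_lt p hmon hne1
  have heq : Polynomial.aeval A p = Polynomial.aeval A (p %ₘ minpoly ℝ A) := by
    conv_lhs => rw [← Polynomial.modByMonic_add_div p (minpoly ℝ A)]
    simp [map_add, map_mul, minpoly.aeval]
  rw [heq, Polynomial.aeval_eq_sum_range' hdeg]
  exact Submodule.sum_mem _ fun k hk =>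
    Submodule.smul_mem _ _
      (Submodule.subset_span ⟨⟨k, Finset.mem_range.mp hk⟩, rfl⟩)

lemma indep_Ai {D : ℕ} (hatt : ∀ i ≤ D, ∃ u v : V, G.dist u v = i) :
    LinearIndependent ℝ (fun i : Fin (D + 1) => Ai G (i : ℕ)) := by
  rw [Fintype.linearIndependent_iff]
  intro g hg i
  obtain ⟨u, v, huv⟩ := hatt (i : ℕ) (by omega)
  have h0 : (∑ j : Fin (D + 1), g j • Ai G (j : ℕ)) u v = 0 := by
    rw [hg]
    rfl
  rw [Matrix.sum_apply] at h0
  rw [Finset.sum_eq_single i] at h0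
  · rw [Matrix.smul_apply, Ai_apply, if_pos huv, smul_eq_mul, mul_one] at h0
    exact h0
  · intro b _ hb
    rw [Matrix.smul_apply, Ai_apply]
    have : G.dist u v ≠ (b : ℕ) := by
      rw [huv]
      intro hc
      exact hb (Fin.ext hc.symm)
    simp [this]
  · intro hmem
    exact absurd (Finset.mem_univ _) hmem

lemma indep_pow {d : ℕ} (hd : (minpoly ℝ (G.adjMatrix ℝ)).natDegree = d + 1) :
    LinearIndependent ℝ (fun k : Fin (d + 1) => G.adjMatrix ℝ ^ (k : ℕ)) := by
  set A := G.adjMatrix ℝ with hA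
  rw [Fintype.linearIndependent_iff]
  intro g hg
  by_contra hcon
  push_neg at hcon
  obtain ⟨i, hi⟩ := hcon
  set p : ℝ[X] := ∑ k : Fin (d + 1), Polynomial.C (g k) * Polynomial.X ^ (k : ℕ)
    with hp
  have hcoeff : p.coeff (i : ℕ) = g i := by
    rw [hp, Polynomial.finset_sum_coeff]
    rw [Finset.sum_eq_single i]
    · simp
    · intro b _ hb
      rw [Polynomial.coeff_C_mul, Polynomial.coeff_X_pow]
      have : (i : ℕ) ≠ (b : ℕ) := fun hc => hb (Fin.ext hc.symm)
      simp [this]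
    · intro hmem
      exact absurd (Finset.mem_univ _) hmem
  have hp0 : p ≠ 0 := by
    intro hc
    rw [hc] at hcoeff
    simp at hcoeff
    exact hi hcoeff.symm
  have hae : Polynomial.aeval A p = 0 := by
    rw [hp, map_sum]
    rw [← hg]
    refine Finset.sum_congr rfl fun k _ => ?_
    rw [map_mul, Polynomial.aeval_C, map_pow, Polynomial.aeval_X,
      Algebra.smul_def]
  have hdle : (minpoly ℝ A).degree ≤ p.degree :=
    minpoly.degree_le_of_ne_zero ℝ A hp0 hae
  have hnd : (minpoly ℝ A).natDegree ≤ p.natDegree :=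
    Polynomial.natDegree_le_natDegree hdle
  have hpd : p.natDegree ≤ d := by
    rw [hp]
    refine Polynomial.natDegree_sum_le_of_forall_le _ _ fun k _ => ?_
    exact (Polynomial.natDegree_C_mul_X_pow_le (g k) (k : ℕ)).trans (by omega)
  omega

lemma card_le_finrank_of_indep {ι : Type*} [Fintype ι]
    {S : Submodule ℝ (Matrix V V ℝ)} {f : ι → Matrix V V ℝ}
    (hf : ∀ i, f i ∈ S) (hind : LinearIndependent ℝ f) :
    Fintype.card ι ≤ finrank ℝ S := by
  have hcomp : S.subtype ∘ (fun i => (⟨f i, hf i⟩ : S)) = f := rfl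
  have h2 : LinearIndependent ℝ (fun i => (⟨f i, hf i⟩ : S)) := by
    apply LinearIndependent.of_comp S.subtype
    rw [hcomp]
    exact hind
  exact h2.fintype_card_le_finrank

lemma finrank_span_range_le {n : ℕ} (f : Fin (n + 1) → Matrix V V ℝ) :
    finrank ℝ (Submodule.span ℝ (Set.range f)) ≤ n + 1 := by
  have h1 := finrank_span_le_card (R := ℝ) (Set.range f)
  refine h1.trans ?_
  rw [Set.toFinset_range]
  exact Finset.card_image_le.trans (by simp)

lemma count_dc (hconn : G.Connected) (hreg : IsDistanceRegular G) (j : ℕ) :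
    DC G (Ai G j * G.adjMatrix ℝ) := by
  classical
  choose b c hbc using hreg
  -- the degree of every vertex is b 0
  have hdeg : ∀ v : V,
      (Finset.univ.filter (fun w => G.Adj w v)).card = b 0 := by
    intro v
    have h0 := (hbc 0 v v (by simp)).1
    rw [← h0]
    exact card_filter_ext (fun w =>
      ⟨fun hw => ⟨hw.symm, SimpleGraph.dist_eq_one_iff_adj.mpr hw.symm⟩,
       fun hw => hw.1.symm⟩)
  -- the main counting function
  have main : ∀ u v : V,
      (Finset.univ.filter (fun w => G.dist u w = j ∧ G.Adj w v)).card =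
        (if G.dist u v + 1 = j then b (G.dist u v)
         else if G.dist u v = j + 1 then c (G.dist u v)
         else if G.dist u v = j then
           (if G.dist u v = 0 then 0 else b 0 - b j - c j)
         else 0) := by
    intro u v
    set m := G.dist u v with hm
    have hb1 : (Finset.univ.filter
        (fun w => G.dist u w = m + 1 ∧ G.Adj w v)).card = b m := by
      rw [← (hbc m u v hm.symm).1]
      exact card_filter_ext (fun w =>
        ⟨fun hw => ⟨hw.2.symm, hw.1⟩, fun hw => ⟨hw.2, hw.1.symm⟩⟩)
    have hc1 : (Finset.univ.filter
        (fun w => G.dist u w = m - 1 ∧ G.Adj w v)).card = c m := by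
      rw [← (hbc m u v hm.symm).2]
      exact card_filter_ext (fun w =>
        ⟨fun hw => ⟨hw.2.symm, hw.1⟩, fun hw => ⟨hw.2, hw.1.symm⟩⟩)
    by_cases h1 : m + 1 = j
    · rw [if_pos h1, ← h1]
      exact hb1
    · rw [if_neg h1]
      by_cases h2 : m = j + 1
      · rw [if_pos h2]
        have : j = m - 1 := by omega
        rw [this]
        exact hc1
      · rw [if_neg h2]
        by_cases h3 : m = j
        · rw [if_pos h3]
          by_cases h4 : m = 0
          · rw [if_pos h4]
            rw [Finset.card_eq_zero, Finset.filter_eq_empty_iff]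
            intro w _
            rintro ⟨hdw, hadj⟩
            have huv : u = v := hconn.dist_eq_zero_iff.mp (by omega)
            have hwu : w = u := by
              have : G.dist u w = 0 := by omega
              exact (hconn.dist_eq_zero_iff.mp this).symm
            subst h3
            rw [hwu, huv] at hadj
            exact G.loopless.irrefl v hadj
          · rw [if_neg h4]
            -- partition of neighbours of v by distance to u
            have hsplit : Finset.univ.filter (fun w => G.Adj w v) =
                (Finset.univ.filter (fun w => G.dist u w = m - 1 ∧ G.Adj w v)) ∪
                ((Finset.univ.filter (fun w => G.dist u w = m ∧ G.Adj w v)) ∪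
                 (Finset.univ.filter
                   (fun w => G.dist u w = m + 1 ∧ G.Adj w v))) := by
              ext w
              simp only [Finset.mem_filter, Finset.mem_union, Finset.mem_univ,
                true_and]
              constructor
              · intro ha
                obtain ⟨hB1, hB2⟩ := dist_adj_bounds G hconn (u := u) ha
                rw [← hm] at hB1 hB2
                have : G.dist u w = m - 1 ∨ G.dist u w = m ∨
                    G.dist u w = m + 1 := by omega
                tauto
              · intro ha
                tauto
            have hd12 : Disjoint
                (Finset.univ.filter (fun w => G.dist u w = m - 1 ∧ G.Adj w v))
                ((Finset.univ.filter (fun w => G.dist u w = m ∧ G.Adj w v)) ∪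
                 (Finset.univ.filter
                   (fun w => G.dist u w = m + 1 ∧ G.Adj w v))) := by
              rw [Finset.disjoint_left]
              intro w hw1 hw2
              simp only [Finset.mem_filter, Finset.mem_union, Finset.mem_univ,
                true_and] at hw1 hw2
              omega
            have hd23 : Disjoint
                (Finset.univ.filter (fun w => G.dist u w = m ∧ G.Adj w v))
                (Finset.univ.filter
                  (fun w => G.dist u w = m + 1 ∧ G.Adj w v)) := by
              rw [Finset.disjoint_left]
              intro w hw1 hw2
              simp only [Finset.mem_filter, Finset.mem_univ, true_and]
                at hw1 hw2
              omega
            have hcards := hdeg v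
            rw [hsplit, Finset.card_union_of_disjoint hd12,
              Finset.card_union_of_disjoint hd23] at hcards
            rw [hc1, hb1] at hcards
            subst h3
            omega
        · rw [if_neg h3]
          rw [Finset.card_eq_zero, Finset.filter_eq_empty_iff]
          intro w _
          rintro ⟨hdw, hadj⟩
          obtain ⟨hB1, hB2⟩ := dist_adj_bounds G hconn (u := u) hadj
          rw [← hm] at hB1 hB2
          omega
  intro u v u' v' h
  rw [mul_adj_apply, mul_adj_apply]
  norm_cast
  rw [main u v, main u' v', h]

lemma mul_adj_mem {D : ℕ} (hDub : ∀ v w : V, G.dist v w ≤ D)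
    (hatt : ∀ i ≤ D, ∃ u v : V, G.dist u v = i)
    (hdc : ∀ j : ℕ, DC G (Ai G j * G.adjMatrix ℝ))
    {M : Matrix V V ℝ} (hM : M ∈ SpanAi G D) :
    M * G.adjMatrix ℝ ∈ SpanAi G D := by
  induction hM using Submodule.span_induction with
  | mem x hx =>
    obtain ⟨i, rfl⟩ := hx
    exact mem_of_dc G hDub hatt (hdc (i : ℕ))
  | zero => rw [Matrix.zero_mul]; exact Submodule.zero_mem _
  | add x y _ _ hx hy => rw [Matrix.add_mul]; exact Submodule.add_mem _ hx hy
  | smul r x _ hx => rw [Matrix.smul_mul]; exact Submodule.smul_mem _ _ hx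

lemma one_eq_Ai_zero (hconn : G.Connected) :
    (1 : Matrix V V ℝ) = Ai G 0 := by
  ext u v
  rw [Matrix.one_apply, Ai_apply]
  by_cases h : u = v
  · subst h
    simp
  · have : G.dist u v ≠ 0 := fun hc => h (hconn.dist_eq_zero_iff.mp hc)
    simp [h, this]

lemma pow_mem {D : ℕ} (hconn : G.Connected)
    (hDub : ∀ v w : V, G.dist v w ≤ D)
    (hatt : ∀ i ≤ D, ∃ u v : V, G.dist u v = i)
    (hdc : ∀ j : ℕ, DC G (Ai G j * G.adjMatrix ℝ)) (n : ℕ) :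
    G.adjMatrix ℝ ^ n ∈ SpanAi G D := by
  induction n with
  | zero =>
    rw [pow_zero, one_eq_Ai_zero G hconn]
    exact Submodule.subset_span ⟨(0 : Fin (D + 1)), rfl⟩
  | succ n ih =>
    rw [pow_succ]
    exact mul_adj_mem G hDub hatt hdc ih

end Stmt12Aux

open Stmt12Aux Finset Polynomial SimpleGraph Module

/-- A distance-polynomial graph with diameter `D` and `d + 1` distinct
eigenvalues is distance-regular iff `D = d`. -/
theorem stmt12 {V : Type*} [Fintype V] [DecidableEq V] [Nonempty V] (G : SimpleGraph V)
    [DecidableRel G.Adj] (hconn : G.Connected) (d D : ℕ)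
    (hd : (minpoly ℝ (G.adjMatrix ℝ)).natDegree = d + 1)
    (hDub : ∀ v w : V, G.dist v w ≤ D)
    (hDattained : ∃ v w : V, G.dist v w = D)
    (hdp : ∀ i : ℕ, i ≤ D → ∃ p : Polynomial ℝ,
      Polynomial.aeval (G.adjMatrix ℝ) p =
        Matrix.of (fun v w => if G.dist v w = i then (1 : ℝ) else 0)) :
    IsDistanceRegular G ↔ D = d := by
  classical
  have hatt : ∀ i ≤ D, ∃ u v : V, G.dist u v = i :=
    attained G hconn hDattained
  have hAiMem : ∀ i : ℕ, i ≤ D → Ai G i ∈ SpanPow G d := by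
    intro i hi
    obtain ⟨p, hp⟩ := hdp i hi
    have := aeval_mem G hd p
    rw [hp] at this
    exact this
  have hind := indep_Ai G hatt
  have hDled : D ≤ d := by
    have h1 : Fintype.card (Fin (D + 1)) ≤ finrank ℝ (SpanPow G d) :=
      card_le_finrank_of_indep (fun i : Fin (D + 1) =>
        hAiMem (i : ℕ) (by omega)) hind
    have h2 : finrank ℝ (SpanPow G d) ≤ d + 1 := finrank_span_range_le _
    rw [Fintype.card_fin] at h1
    omega
  constructor
  · intro hreg
    have hdc : ∀ j : ℕ, DC G (Ai G j * G.adjMatrix ℝ) :=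
      count_dc G hconn hreg
    have hpow : ∀ n : ℕ, G.adjMatrix ℝ ^ n ∈ SpanAi G D :=
      pow_mem G hconn hDub hatt hdc
    have hindp := indep_pow G hd
    have h1 : Fintype.card (Fin (d + 1)) ≤ finrank ℝ (SpanAi G D) :=
      card_le_finrank_of_indep (fun k : Fin (d + 1) => hpow (k : ℕ)) hindp
    have h2 : finrank ℝ (SpanAi G D) ≤ D + 1 := finrank_span_range_le _
    rw [Fintype.card_fin] at h1
    omega
  · intro hDd
    subst hDd
    -- the two spans coincide
    have hle : SpanAi G D ≤ SpanPow G D := by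
      rw [SpanAi, Submodule.span_le]
      rintro x ⟨i, rfl⟩
      exact hAiMem (i : ℕ) (by omega)
    have hfr1 : finrank ℝ (SpanAi G D) = D + 1 := by
      rw [SpanAi, finrank_span_eq_card hind, Fintype.card_fin]
    have hfr2 : finrank ℝ (SpanPow G D) ≤ D + 1 := finrank_span_range_le _
    have heq : SpanAi G D = SpanPow G D :=
      Submodule.eq_of_le_of_finrank_le hle (by omega)
    have hdc : ∀ j : ℕ, j ≤ D → DC G (Ai G j * G.adjMatrix ℝ) := by
      intro j hj
      obtain ⟨p, hp⟩ := hdp j hj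
      have hmem : Ai G j * G.adjMatrix ℝ ∈ SpanPow G D := by
        have hpx : Ai G j * G.adjMatrix ℝ =
            Polynomial.aeval (G.adjMatrix ℝ) (p * Polynomial.X) := by
          rw [map_mul, Polynomial.aeval_X, hp]
          rfl
        rw [hpx]
        exact aeval_mem G hd _
      rw [← heq] at hmem
      exact dc_of_mem G hmem
    -- build the intersection numbers
    intro i
    by_cases hi : i ≤ D
    · obtain ⟨u0, v0, h0⟩ := hatt i hi
      refine ⟨(Finset.univ.filter
          (fun w => G.Adj v0 w ∧ G.dist u0 w = i + 1)).card,
        (Finset.univ.filter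
          (fun w => G.Adj v0 w ∧ G.dist u0 w = i - 1)).card, ?_⟩
      intro u v huv
      constructor
      · by_cases hiD : i = D
        · -- both sides are empty since no vertex is at distance D + 1
          have hzero : ∀ a : V, ∀ w : V,
              ¬ (G.Adj v w ∧ G.dist a w = i + 1) → True := fun _ _ _ => trivial
          refine (card_filter_zero fun w => ?_).trans
            (card_filter_zero (p := fun w => G.Adj v0 w ∧
              G.dist u0 w = i + 1) fun w => ?_).symm
          · rintro ⟨-, hw⟩
            have := hDub u w
            omega
          · rintro ⟨-, hw⟩
            have := hDub u0 w
            omega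
        · have hj : i + 1 ≤ D := by omega
          have hDC := hdc (i + 1) hj u v u0 v0 (by rw [huv, h0])
          rw [mul_adj_apply, mul_adj_apply] at hDC
          norm_cast at hDC
          refine (card_filter_ext (fun w =>
            ⟨fun hw => ⟨hw.2, hw.1.symm⟩, fun hw => ⟨hw.2.symm, hw.1⟩⟩)).trans
            (hDC.trans (card_filter_ext (fun w =>
            ⟨fun hw => ⟨hw.2.symm, hw.1⟩, fun hw => ⟨hw.2, hw.1.symm⟩⟩)))
      · by_cases hi0 : i = 0
        · subst hi0
          have hzero : ∀ a b : V, G.dist a b = 0 → ∀ w : V,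
              ¬ (G.Adj b w ∧ G.dist a w = 0 - 1) := by
            intro a b hab w
            have hab' : a = b := hconn.dist_eq_zero_iff.mp hab
            rintro ⟨hadj, hw⟩
            have haw : a = w := hconn.dist_eq_zero_iff.mp (by simpa using hw)
            rw [← haw, ← hab'] at hadj
            exact G.loopless.irrefl a hadj
          exact (card_filter_zero (hzero u v huv)).trans
            (card_filter_zero (p := fun w => G.Adj v0 w ∧
              G.dist u0 w = 0 - 1) (hzero u0 v0 h0)).symm
        · have hj : i - 1 ≤ D := by omega
          have hDC := hdc (i - 1) hj u v u0 v0 (by rw [huv, h0])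
          rw [mul_adj_apply, mul_adj_apply] at hDC
          norm_cast at hDC
          refine (card_filter_ext (fun w =>
            ⟨fun hw => ⟨hw.2, hw.1.symm⟩, fun hw => ⟨hw.2.symm, hw.1⟩⟩)).trans
            (hDC.trans (card_filter_ext (fun w =>
            ⟨fun hw => ⟨hw.2.symm, hw.1⟩, fun hw => ⟨hw.2, hw.1.symm⟩⟩)))
    · refine ⟨0, 0, ?_⟩
      intro u v huv
      have := hDub u v
      omega
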